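/- Let U ⊆ ℝ^m be a nonempty polyhedral set, M ∈ ℝ^{m×m} symmetric positive semidefinite, B ∈ ℝ^{m×n} injective, b ∈ ℝ^m, and define ρ : ℝ^n → ℝ ∪ {+∞} by ρ(y) = θ_{U,M}(b + B y). Suppose ρ is coercive, and let k be the dimension of aff(dom(ρ)). Then for every affine isometric map φ : ℝ^k → ℝ^n whose image is aff(dom(ρ)) and every nonnegative integer p, the function x ↦ ‖x‖^p · exp(−ρ(φ(x))) (with the convention exp(−∞) = 0) is integrable on ℝ^k with respect to k-dimensional Lebesgue measure; i.e., the PLQ density has moments of all orders. -/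

import Mathlib

open Matrix Set MeasureTheory
open scoped RealInnerProductSpace

noncomputable section

/-- `E d` is Euclidean space `ℝ^d`. -/
abbrev E (d : ℕ) := EuclideanSpace ℝ (Fin d)

/-- Matrix-vector multiplication as a map between Euclidean spaces. -/
def mulVecE {m n : ℕ} (B : Matrix (Fin m) (Fin n) ℝ) (y : E n) : E m :=
  Matrix.toEuclideanLin B y

/-- The polar of a set `K`: `K° = {v | ⟪v, w⟫ ≤ 0 for all w ∈ K}`. -/
def polarCone {d : ℕ} (K : Set (E d)) : Set (E d) :=
  {v | ∀ w ∈ K, ⟪v, w⟫ ≤ 0}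

/-- The horizon cone of `C`: directions `x` with `w + τ • x ∈ C` for all `w ∈ C`, `τ ≥ 0`. -/
def horizonCone {d : ℕ} (C : Set (E d)) : Set (E d) :=
  {x | ∀ w ∈ C, ∀ τ : ℝ, 0 ≤ τ → w + τ • x ∈ C}

/-- The null space of a matrix `M`, as a set of vectors. -/
def nullSet {d : ℕ} (M : Matrix (Fin d) (Fin d) ℝ) : Set (E d) :=
  {w | mulVecE M w = 0}

/-- A set is polyhedral if it is of the form `{u | Aᵀ u ≤ a}` (componentwise). -/
def IsPolyhedral {d : ℕ} (U : Set (E d)) : Prop :=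
  ∃ (k : ℕ) (A : Matrix (Fin d) (Fin k) ℝ) (a : Fin k → ℝ),
    U = {u | ∀ i, mulVecE Aᵀ u i ≤ a i}

/-- The piecewise linear-quadratic penalty
`θ_{U,M}(w) = sup_{u ∈ U} (⟪u, w⟫ - (1/2) ⟪u, M u⟫)`, valued in `ℝ ∪ {±∞}`. -/
def theta {m : ℕ} (U : Set (E m)) (M : Matrix (Fin m) (Fin m) ℝ) (w : E m) : EReal :=
  ⨆ u ∈ U, ((⟪u, w⟫ - (1 / 2) * ⟪u, mulVecE M u⟫ : ℝ) : EReal)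

/-- `cone U = {t • u | u ∈ U, t ≥ 0}`. -/
def coneOf {d : ℕ} (U : Set (E d)) : Set (E d) :=
  {w | ∃ u ∈ U, ∃ t : ℝ, 0 ≤ t ∧ w = t • u}

/-- A function `ρ : ℝ^n → ℝ ∪ {+∞}` is coercive if `ρ(y) → +∞` as `‖y‖ → ∞`. -/
def Coercive {n : ℕ} (ρ : E n → EReal) : Prop :=
  ∀ C : ℝ, ∃ R : ℝ, ∀ y : E n, R ≤ ‖y‖ → (C : EReal) ≤ ρ y

/-- Auxiliary decay estimate: `t^p e^{-αt} (1+t)^j` is bounded by an explicit constant. -/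
lemma plq_decay_aux (p j : ℕ) {α t : ℝ} (hα : 0 < α) (ht : 0 ≤ t) :
    t ^ p * Real.exp (-(α * t)) * (1 + t) ^ j
      ≤ ((p + j).factorial : ℝ) * α⁻¹ ^ (p + j) * Real.exp α := by
  set q := p + j with hq
  have h1 : (0:ℝ) ≤ 1 + t := by linarith
  have h2 : t ^ p * (1 + t) ^ j ≤ (1 + t) ^ q := by
    rw [hq, pow_add]
    exact mul_le_mul (pow_le_pow_left₀ ht (by linarith) p) le_rfl (by positivity) (by positivity)
  have h3 := Real.pow_div_factorial_le_exp (x := α * (1 + t)) (by positivity) q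
  have hfac : (0:ℝ) < (q.factorial : ℝ) := by exact_mod_cast q.factorial_pos
  have hαq : (0:ℝ) < α ^ q := by positivity
  have hexp : Real.exp (α * (1 + t)) = Real.exp α * Real.exp (α * t) := by
    rw [← Real.exp_add]; ring_nf
  rw [div_le_iff₀ hfac, mul_pow, hexp] at h3
  have h5 : (1 + t) ^ q ≤ (q.factorial : ℝ) * α⁻¹ ^ q * (Real.exp α * Real.exp (α * t)) := by
    have hinv : α⁻¹ ^ q * α ^ q = 1 := by
      rw [← mul_pow, inv_mul_cancel₀ hα.ne', one_pow]
    calc (1 + t) ^ q = (α ^ q * (1 + t) ^ q) * α⁻¹ ^ q := by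
          rw [mul_comm (α ^ q), mul_assoc, mul_comm (α ^ q), hinv, mul_one]
      _ ≤ (Real.exp α * Real.exp (α * t) * (q.factorial : ℝ)) * α⁻¹ ^ q := by gcongr
      _ = (q.factorial : ℝ) * α⁻¹ ^ q * (Real.exp α * Real.exp (α * t)) := by ring
  calc t ^ p * Real.exp (-(α * t)) * (1 + t) ^ j
      = (t ^ p * (1 + t) ^ j) * Real.exp (-(α * t)) := by ring
    _ ≤ (1 + t) ^ q * Real.exp (-(α * t)) :=
        mul_le_mul_of_nonneg_right h2 (Real.exp_nonneg _)
    _ ≤ ((q.factorial : ℝ) * α⁻¹ ^ q * (Real.exp α * Real.exp (α * t))) * Real.exp (-(α * t)) :=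
        mul_le_mul_of_nonneg_right h5 (Real.exp_nonneg _)
    _ = (q.factorial : ℝ) * α⁻¹ ^ q * Real.exp α * (Real.exp (α * t) * Real.exp (-(α * t))) := by
        ring
    _ = (q.factorial : ℝ) * α⁻¹ ^ q * Real.exp α := by
        rw [← Real.exp_add, add_neg_cancel, Real.exp_zero, mul_one]

set_option maxHeartbeats 1600000 in
/-- moments of all orders: if rho(y) = theta_{U,M}(b + B y) is coercive,
then for every nonnegative integer p the function x ↦ ‖x‖^p * exp(-rho(φ x))
(with exp(-infty) = 0) is integrable on ℝ^k, k = dim aff (dom rho), where φ is any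
affine isometry of ℝ^k onto aff (dom rho). -/
theorem plq_moments {m n : ℕ}
    (U : Set (E m)) (hUne : U.Nonempty) (hUpoly : IsPolyhedral U)
    (M : Matrix (Fin m) (Fin m) ℝ) (hM : M.PosSemidef)
    (B : Matrix (Fin m) (Fin n) ℝ) (hB : Function.Injective (mulVecE B))
    (b : E m)
    (ρ : E n → EReal) (hρ : ∀ y, ρ y = theta U M (b + mulVecE B y))
    (hcoer : Coercive ρ)
    (k : ℕ) (hk : k = Module.finrank ℝ (affineSpan ℝ {y | ρ y < ⊤}).direction)
    (φ : E k →ᵃ[ℝ] E n) (hφiso : Isometry φ)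
    (hφrange : Set.range φ = (affineSpan ℝ {y | ρ y < ⊤} : Set (E n)))
    (p : ℕ) :
    Integrable
      (fun x : E k =>
        ‖x‖ ^ p * (if ρ (φ x) = ⊤ then 0 else Real.exp (-(ρ (φ x)).toReal)))
      (volume : Measure (E k)) := by
  classical
  obtain ⟨u₀, hu₀⟩ := hUne
  set T : E n →L[ℝ] E m := (Matrix.toEuclideanLin B).toContinuousLinearMap with hTdef
  have hTB : ∀ v, mulVecE B v = T v := fun _ => rfl
  -- the affine minorants
  set L : E m → E k → ℝ :=
    fun u x => ⟪u, b + mulVecE B (φ x)⟫ - (1 / 2) * ⟪u, mulVecE M u⟫ with hLdef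
  have hψ : ∀ x, ρ (φ x) = ⨆ u ∈ U, ((L u x : ℝ) : EReal) := fun x => by
    rw [hρ]; rfl
  have hle : ∀ (x : E k) {u : E m}, u ∈ U → ((L u x : ℝ) : EReal) ≤ ρ (φ x) := by
    intro x u hu
    rw [hψ]
    exact le_iSup₂ (f := fun u (_ : u ∈ U) => ((L u x : ℝ) : EReal)) u hu
  have hsup : ∀ (x : E k) (r : EReal),
      (∀ u ∈ U, ((L u x : ℝ) : EReal) ≤ r) → ρ (φ x) ≤ r := by
    intro x r h
    rw [hψ]; exact iSup₂_le h
  have hbot : ∀ x : E k, ρ (φ x) ≠ ⊥ := by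
    intro x h
    have := hle x hu₀
    rw [h, le_bot_iff] at this
    exact (EReal.coe_ne_bot _) this
  -- a point x₀ in the domain
  have hD : {y | ρ y < ⊤}.Nonempty := by
    rw [← affineSpan_nonempty (k := ℝ)]
    exact hφrange ▸ ⟨φ 0, mem_range_self 0⟩
  obtain ⟨y₀, hy₀⟩ := hD
  have hy₀span : y₀ ∈ (affineSpan ℝ {y | ρ y < ⊤} : Set (E n)) :=
    subset_affineSpan ℝ _ hy₀
  obtain ⟨x₀, hx₀⟩ : y₀ ∈ Set.range φ := by rw [hφrange]; exact hy₀span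
  have hx₀top : ρ (φ x₀) ≠ ⊤ := by rw [hx₀]; exact hy₀.ne
  set a : ℝ := (ρ (φ x₀)).toReal with hadef
  have ha : ((a : ℝ) : EReal) = ρ (φ x₀) := EReal.coe_toReal hx₀top (hbot x₀)
  -- coercivity radius
  obtain ⟨R₀, hR₀⟩ := hcoer (a + 1)
  set R' : ℝ := max (R₀ + ‖φ x₀‖) 1 with hR'def
  have hR'pos : (0:ℝ) < R' := lt_of_lt_of_le one_pos (le_max_right _ _)
  have hR'ge : R₀ + ‖φ x₀‖ ≤ R' := le_max_left _ _
  -- far-field convexity bound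
  have far : ∀ x : E k, ρ (φ x) ≠ ⊤ → R' ≤ ‖x - x₀‖ →
      a + ‖x - x₀‖ / R' ≤ (ρ (φ x)).toReal := by
    intro x hxt hdge
    set d := ‖x - x₀‖ with hddef
    have hd0 : 0 < d := lt_of_lt_of_le hR'pos hdge
    set lam := R' / d with hlamdef
    have hlam0 : 0 < lam := div_pos hR'pos hd0
    have hlam1 : lam ≤ 1 := (div_le_one hd0).mpr hdge
    set c : ℝ := (ρ (φ x)).toReal with hcdef
    have hc : ((c : ℝ) : EReal) = ρ (φ x) := EReal.coe_toReal hxt (hbot x)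
    set z : E k := AffineMap.lineMap x₀ x lam with hzdef
    have hzsub : z - x₀ = lam • (x - x₀) := by
      rw [hzdef, AffineMap.lineMap_apply_module]; module
    have hznorm : ‖z - x₀‖ = R' := by
      rw [hzsub, norm_smul, Real.norm_eq_abs, abs_of_pos hlam0, hlamdef, ← hddef]
      field_simp
    have hφznorm : R₀ ≤ ‖φ z‖ := by
      have h1 : ‖φ z - φ x₀‖ = R' := by
        rw [← dist_eq_norm, hφiso.dist_eq, dist_eq_norm, hznorm]
      have h2 : ‖φ z - φ x₀‖ ≤ ‖φ z‖ + ‖φ x₀‖ := norm_sub_le _ _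
      linarith
    have hCz : (((a + 1 : ℝ)) : EReal) ≤ ρ (φ z) := hR₀ _ hφznorm
    have hcomb : ∀ u : E m, L u z = (1 - lam) * L u x₀ + lam * L u x := by
      intro u
      have h1 : φ z = (1 - lam) • φ x₀ + lam • φ x := by
        rw [hzdef, AffineMap.apply_lineMap, AffineMap.lineMap_apply_module]
      have h2 : b + mulVecE B (φ z) =
          (1 - lam) • (b + mulVecE B (φ x₀)) + lam • (b + mulVecE B (φ x)) := by
        simp only [hTB, h1, map_add, _root_.map_smul]
        module
      simp only [hLdef]
      rw [h2]
      simp only [inner_add_right, real_inner_smul_right]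
      ring
    have hzle : ρ (φ z) ≤ (((1 - lam) * a + lam * c : ℝ) : EReal) := by
      apply hsup
      intro u hu
      rw [hcomb u]
      apply EReal.coe_le_coe_iff.mpr
      have hua : L u x₀ ≤ a := EReal.coe_le_coe_iff.mp (ha ▸ hle x₀ hu)
      have huc : L u x ≤ c := EReal.coe_le_coe_iff.mp (hc ▸ hle x hu)
      nlinarith
    have hconv : a + 1 ≤ (1 - lam) * a + lam * c :=
      EReal.coe_le_coe_iff.mp (hCz.trans hzle)
    have hlc : 1 ≤ lam * (c - a) := by nlinarith
    have hld : lam * d = R' := by rw [hlamdef]; field_simp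
    have h6 : d / R' ≤ c - a := by
      rw [div_le_iff₀ hR'pos]
      nlinarith [mul_le_mul_of_nonneg_left hlc hd0.le, hld]
    linarith
  -- near-field affine bound
  set K : ℝ := ‖u₀‖ * ‖T‖ with hKdef
  have hK0 : 0 ≤ K := by positivity
  have near : ∀ x : E k, ρ (φ x) ≠ ⊤ →
      L u₀ x₀ - K * ‖x - x₀‖ ≤ (ρ (φ x)).toReal := by
    intro x hxt
    have h1 : (L u₀ x : ℝ) ≤ (ρ (φ x)).toReal :=
      EReal.coe_le_coe_iff.mp ((EReal.coe_toReal hxt (hbot x)) ▸ hle x hu₀)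
    have h2 : L u₀ x₀ - L u₀ x ≤ K * ‖x - x₀‖ := by
      have e1 : L u₀ x₀ - L u₀ x = ⟪u₀, T (φ x₀) - T (φ x)⟫ := by
        simp only [hLdef, hTB, inner_add_right, inner_sub_right]
        ring
      rw [e1]
      calc ⟪u₀, T (φ x₀) - T (φ x)⟫ ≤ ‖u₀‖ * ‖T (φ x₀) - T (φ x)‖ :=
            real_inner_le_norm _ _
        _ = ‖u₀‖ * ‖T (φ x₀ - φ x)‖ := by rw [map_sub]
        _ ≤ ‖u₀‖ * (‖T‖ * ‖φ x₀ - φ x‖) := by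
            gcongr
            exact T.le_opNorm _
        _ = K * ‖x - x₀‖ := by
            rw [← dist_eq_norm, hφiso.dist_eq, dist_eq_norm, norm_sub_rev, hKdef]
            ring
    linarith
  -- global linear lower bound
  set al : ℝ := 1 / R' with haldef
  have hal : 0 < al := by positivity
  set be : ℝ := max (‖x₀‖ / R' - a) (al * (R' + ‖x₀‖) + (K * R' - L u₀ x₀)) with hbedef
  have hlin : ∀ x : E k, ρ (φ x) ≠ ⊤ → al * ‖x‖ - be ≤ (ρ (φ x)).toReal := by
    intro x hxt
    rcases le_or_gt R' ‖x - x₀‖ with hfar | hnear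
    · have h1 := far x hxt hfar
      have h2 : ‖x‖ - ‖x₀‖ ≤ ‖x - x₀‖ := norm_sub_norm_le x x₀
      have h3 : ‖x₀‖ / R' - a ≤ be := le_max_left _ _
      have h4 : (‖x‖ - ‖x₀‖) / R' ≤ ‖x - x₀‖ / R' := by gcongr
      have h5 : al * ‖x‖ - (‖x₀‖ / R' - a) = a + (‖x‖ - ‖x₀‖) / R' := by
        rw [haldef]; field_simp; ring
      linarith
    · have h1 := near x hxt
      have h3 : ‖x‖ ≤ R' + ‖x₀‖ := by
        have := norm_le_norm_add_norm_sub' x x₀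
        have h2 : ‖x - x₀‖ ≤ R' := hnear.le
        rw [norm_sub_rev] at h2
        linarith [norm_add_le (x - x₀) x₀, congrArg norm (sub_add_cancel x x₀)]
      have h4 : al * (R' + ‖x₀‖) + (K * R' - L u₀ x₀) ≤ be := le_max_right _ _
      nlinarith [mul_le_mul_of_nonneg_left h3 hal.le,
        mul_le_mul_of_nonneg_left hnear.le hK0]
  -- measurability
  have hmeasψ : Measurable (fun x : E k => ρ (φ x)) := by
    have hls : LowerSemicontinuous (fun x : E k => ρ (φ x)) := by
      have he : (fun x : E k => ρ (φ x)) = fun x => ⨆ u ∈ U, ((L u x : ℝ) : EReal) :=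
        funext hψ
      rw [he]
      apply lowerSemicontinuous_iSup
      intro u
      apply lowerSemicontinuous_iSup
      intro _
      apply Continuous.lowerSemicontinuous
      apply continuous_coe_real_ereal.comp
      have hc1 : Continuous fun x : E k => b + mulVecE B (φ x) := by
        simp only [hTB]
        exact continuous_const.add (T.continuous.comp hφiso.continuous)
      exact (continuous_const.inner hc1).sub continuous_const
    exact hls.measurable
  have hmeasG : Measurable
      (fun x : E k => if ρ (φ x) = ⊤ then (0:ℝ) else Real.exp (-(ρ (φ x)).toReal)) :=
    Measurable.ite (hmeasψ (measurableSet_singleton ⊤)) measurable_const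
      (Real.measurable_exp.comp (measurable_ereal_toReal.comp hmeasψ).neg)
  have hmeasf : Measurable
      (fun x : E k => ‖x‖ ^ p *
        (if ρ (φ x) = ⊤ then (0:ℝ) else Real.exp (-(ρ (φ x)).toReal))) :=
    (measurable_norm.pow_const p).mul hmeasG
  -- the dominating function
  set Cf : ℝ := Real.exp be * (((p + (k + 1)).factorial : ℝ) * al⁻¹ ^ (p + (k + 1)) *
    Real.exp al) with hCfdef
  have hCf0 : 0 ≤ Cf := by positivity
  have hbound : ∀ x : E k,
      ‖(fun x : E k => ‖x‖ ^ p *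
        (if ρ (φ x) = ⊤ then (0:ℝ) else Real.exp (-(ρ (φ x)).toReal))) x‖
      ≤ Cf * (1 + ‖x‖) ^ (-((k : ℝ) + 1)) := by
    intro x
    set t := ‖x‖ with htdef
    have ht0 : 0 ≤ t := norm_nonneg x
    have h1t : (0:ℝ) < 1 + t := by linarith
    set G : ℝ := if ρ (φ x) = ⊤ then (0:ℝ) else Real.exp (-(ρ (φ x)).toReal) with hGdef
    have hG0 : 0 ≤ G := by
      rw [hGdef]; split
      · exact le_rfl
      · exact (Real.exp_pos _).le
    have hGle : G ≤ Real.exp (be - al * t) := by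
      rw [hGdef]; split
      · exact (Real.exp_pos _).le
      · next hxt =>
          apply Real.exp_le_exp.mpr
          have := hlin x hxt
          linarith
    have hnorm : ‖t ^ p * G‖ = t ^ p * G := by
      rw [Real.norm_eq_abs, abs_of_nonneg (by positivity)]
    have hstep : t ^ p * G ≤ Real.exp be * (t ^ p * Real.exp (-(al * t))) := by
      have : t ^ p * G ≤ t ^ p * Real.exp (be - al * t) := by
        apply mul_le_mul_of_nonneg_left hGle (by positivity)
      calc t ^ p * G ≤ t ^ p * Real.exp (be - al * t) := this
        _ = Real.exp be * (t ^ p * Real.exp (-(al * t))) := by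
            rw [show be - al * t = be + (-(al * t)) by ring, Real.exp_add]; ring
    have hdecay := plq_decay_aux p (k + 1) hal ht0
    have hrpow : (1 + t) ^ (-((k : ℝ) + 1)) = ((1 + t) ^ (k + 1 : ℕ))⁻¹ := by
      rw [show -((k : ℝ) + 1) = -(((k + 1 : ℕ) : ℝ)) by push_cast; ring,
        Real.rpow_neg h1t.le, Real.rpow_natCast]
    have hpow_pos : (0:ℝ) < (1 + t) ^ (k + 1 : ℕ) := by positivity
    have hfinal : t ^ p * Real.exp (-(al * t)) ≤
        (((p + (k + 1)).factorial : ℝ) * al⁻¹ ^ (p + (k + 1)) * Real.exp al) *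
          ((1 + t) ^ (k + 1 : ℕ))⁻¹ := by
      rw [← div_eq_mul_inv, le_div_iff₀ hpow_pos]
      exact hdecay
    show ‖t ^ p * G‖ ≤ Cf * (1 + t) ^ (-((k : ℝ) + 1))
    rw [hnorm, hrpow, hCfdef]
    calc t ^ p * G ≤ Real.exp be * (t ^ p * Real.exp (-(al * t))) := hstep
      _ ≤ Real.exp be * ((((p + (k + 1)).factorial : ℝ) * al⁻¹ ^ (p + (k + 1)) *
            Real.exp al) * ((1 + t) ^ (k + 1 : ℕ))⁻¹) := by
          apply mul_le_mul_of_nonneg_left hfinal (Real.exp_nonneg _)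
      _ = Real.exp be * (((p + (k + 1)).factorial : ℝ) * al⁻¹ ^ (p + (k + 1)) *
            Real.exp al) * ((1 + t) ^ (k + 1 : ℕ))⁻¹ := by ring
  -- conclude
  have hint : Integrable (fun x : E k => Cf * (1 + ‖x‖) ^ (-((k : ℝ) + 1)))
      (volume : Measure (E k)) := by
    apply Integrable.const_mul
    apply integrable_one_add_norm
    rw [finrank_euclideanSpace_fin]
    linarith
  exact hint.mono' hmeasf.aestronglyMeasurable (Filter.Eventually.of_forall hbound)
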